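/- Let P₁,…,P_{k+1} be points in ℝⁿ and fix indices 1 ≤ i < j ≤ k+1. For s ∈ ℝ define a symmetric array L(s) of modified squared distances by L(s)_{uv} = ‖P_u − P_v‖² for all pairs {u,v} ≠ {i,j}, L(s)_{ij} = ‖P_i − P_j‖² + s, and L(s)_{uu} = 0, and let G(s) be the k×k matrix with entries G(s)_{ab} = (L(s)_{1a} + L(s)_{1b} − L(s)_{ab})/2 for 2 ≤ a,b ≤ k+1 (so that G(0)_{ab} = ⟨P_a − P₁, P_b − P₁⟩ and det G(0) is the Gram determinant of the simplex). Then the derivative d/ds [det G(s)] at s = 0 equals det(⟨P_a − P_i, P_b − P_j⟩)_{a,b}, where the indices a and b both run, in increasing order, over the set {1,…,k+1} ∖ {i,j}. (In the paper's notation: ∂_{lij²} (→P₁⋯P_{k+1})² = →P_iP₁⋯P̂_i⋯P̂_j⋯P_{k+1} · →P_jP₁⋯P̂_i⋯P̂_j⋯P_{k+1}.) -/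

import Mathlib

open RealInnerProductSpace

/-- The array of modified squared distances: `L s u v` equals `‖P u - P v‖²` for all pairs
`{u,v} ≠ {i,j}`, equals `‖P i - P j‖² + s` for the pair `{i,j}`, and is `0` on the diagonal. -/
noncomputable def modSqDist {n k : ℕ} (P : Fin (k + 1) → EuclideanSpace ℝ (Fin n))
    (i j : Fin (k + 1)) (s : ℝ) (u v : Fin (k + 1)) : ℝ :=
  if u = v then 0
  else if (u = i ∧ v = j) ∨ (u = j ∧ v = i) then ‖P u - P v‖ ^ 2 + s
  else ‖P u - P v‖ ^ 2

namespace GramDerivAux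

open Matrix Finset

/-- Derivative of the determinant along an affine path of matrices. -/
lemma hasDerivAt_det_add_smul {N : ℕ} (A D : Matrix (Fin N) (Fin N) ℝ) :
    HasDerivAt (fun s : ℝ => (A + s • D).det)
      (∑ q : Fin N, (A.updateCol q fun r => D r q).det) 0 := by
  have h1 : ∀ s : ℝ, (A + s • D).det =
      ∑ σ : Equiv.Perm (Fin N),
        ((Equiv.Perm.sign σ : ℤ) : ℝ) * ∏ q : Fin N, (A (σ q) q + s * D (σ q) q) := by
    intro s
    rw [Matrix.det_apply']
    refine Finset.sum_congr rfl fun σ _ => ?_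
    simp [Matrix.add_apply, Matrix.smul_apply, smul_eq_mul]
  have h2 : HasDerivAt (fun s : ℝ => ∑ σ : Equiv.Perm (Fin N),
        ((Equiv.Perm.sign σ : ℤ) : ℝ) * ∏ q : Fin N, (A (σ q) q + s * D (σ q) q))
      (∑ σ : Equiv.Perm (Fin N), ((Equiv.Perm.sign σ : ℤ) : ℝ) *
        ∑ q : Fin N, (∏ q' ∈ Finset.univ.erase q, A (σ q') q') * D (σ q) q) 0 := by
    apply HasDerivAt.fun_sum
    intro σ _
    have hp : ∀ q ∈ (Finset.univ : Finset (Fin N)),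
        HasDerivAt (fun s : ℝ => A (σ q) q + s * D (σ q) q) (D (σ q) q) 0 :=
      fun q _ => (hasDerivAt_mul_const _).const_add _
    have h := (HasDerivAt.fun_finsetProd hp).const_mul (((Equiv.Perm.sign σ : ℤ) : ℝ))
    convert h using 1
    · rfl
    · simp only [smul_eq_mul]
      congr 1
      refine Finset.sum_congr rfl fun q _ => ?_
      simp
  have h3 : (∑ q : Fin N, (A.updateCol q fun r => D r q).det) =
      ∑ σ : Equiv.Perm (Fin N), ((Equiv.Perm.sign σ : ℤ) : ℝ) *
        ∑ q : Fin N, (∏ q' ∈ Finset.univ.erase q, A (σ q') q') * D (σ q) q := by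
    simp_rw [Finset.mul_sum]
    rw [Finset.sum_comm]
    refine Finset.sum_congr rfl fun q _ => ?_
    rw [Matrix.det_apply']
    refine Finset.sum_congr rfl fun σ _ => ?_
    have : (∏ q' : Fin N, (A.updateCol q fun r => D r q) (σ q') q')
        = D (σ q) q * ∏ q' ∈ Finset.univ.erase q, A (σ q') q' := by
      rw [← Finset.mul_prod_erase _ _ (Finset.mem_univ q)]
      congr 1
      · simp [Matrix.updateCol_apply]
      · refine Finset.prod_congr rfl fun q' hq' => ?_
        rw [Matrix.updateCol_apply, if_neg (Finset.ne_of_mem_erase hq')]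
    rw [this]; ring
  rw [h3]
  exact h2.congr_of_eventuallyEq (Filter.Eventually.of_forall fun s => (h1 s))

/-- Reduction of a "bordered" determinant (Cayley–Menger style border of ones) to a smaller
determinant, based at an arbitrary pair of base indices `c` (rows) and `c'` (columns). -/
lemma bordered_det {m : ℕ} (W : Matrix (Fin (m+2)) (Fin (m+2)) ℝ)
    (h00 : W 0 0 = 0) (h0s : ∀ v : Fin (m+1), W 0 v.succ = 1)
    (hs0 : ∀ u : Fin (m+1), W u.succ 0 = 1) (c c' : Fin (m+1)) :
    W.det = -(-1)^((c:ℕ)+(c':ℕ)) * (Matrix.of fun a b : Fin m =>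
        W (c.succAbove a).succ (c'.succAbove b).succ - W (c.succAbove a).succ c'.succ
        - W c.succ (c'.succAbove b).succ + W c.succ c'.succ).det := by
  set R1 : Matrix (Fin (m+2)) (Fin (m+2)) ℝ := Matrix.of fun x y =>
    W x y + (if x = 0 ∨ x = c.succ then 0 else -1) * W c.succ y with hR1
  have hdet1 : R1.det = W.det :=
    Matrix.det_eq_of_forall_row_eq_smul_add_const
      (fun x => if x = 0 ∨ x = c.succ then 0 else -1) c.succ (by simp) (fun x y => rfl)
  set R2 : Matrix (Fin (m+2)) (Fin (m+2)) ℝ := Matrix.of fun x y =>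
    R1 x y + (if y = 0 ∨ y = c'.succ then 0 else -1) * R1 x c'.succ with hR2
  have hdet2 : R2.det = R1.det := by
    rw [← Matrix.det_transpose R2, ← Matrix.det_transpose R1]
    exact Matrix.det_eq_of_forall_row_eq_smul_add_const
      (fun y => if y = 0 ∨ y = c'.succ then 0 else -1) c'.succ (by simp)
      (fun x y => by simp [hR2, Matrix.transpose_apply])
  -- entries of R1
  have hR1row0 : ∀ y, R1 0 y = W 0 y := by
    intro y; simp [hR1]
  have hR1rowb : ∀ u : Fin (m+1), u ≠ c → ∀ y, R1 u.succ y = W u.succ y - W c.succ y := by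
    intro u hu y
    simp [hR1, Fin.succ_ne_zero, hu]; ring
  have hR1rowc : ∀ y, R1 c.succ y = W c.succ y := by
    intro y; simp [hR1]
  -- entries of R2
  have hR2row0 : ∀ y, R2 0 y = if y = c'.succ then 1 else 0 := by
    intro y
    rcases Fin.eq_zero_or_eq_succ y with rfl | ⟨v, rfl⟩
    · have : ¬((0:Fin (m+2)) = c'.succ) := (Fin.succ_ne_zero c').symm
      simp [hR2, hR1row0, h00, this, h0s]
    · by_cases hv : v = c'
      · subst hv; simp [hR2, hR1row0, h0s]
      · simp [hR2, hR1row0, h0s, Fin.succ_ne_zero, hv]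
  have hR2col0 : ∀ x, R2 x 0 = if x = c.succ then 1 else 0 := by
    intro x
    have h0 : ((0:Fin (m+2)) = 0 ∨ (0:Fin (m+2)) = c'.succ) := Or.inl rfl
    rcases Fin.eq_zero_or_eq_succ x with rfl | ⟨u, rfl⟩
    · have : ¬((0:Fin (m+2)) = c.succ) := (Fin.succ_ne_zero c).symm
      simp [hR2, if_pos h0, hR1row0, h00, this]
    · by_cases hu : u = c
      · subst hu; simp [hR2, if_pos h0, hR1rowc, hs0]
      · simp [hR2, if_pos h0, hR1rowb u hu, hs0, hu]
  have hR2ent : ∀ (u v : Fin (m+1)), u ≠ c → v ≠ c' →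
      R2 u.succ v.succ
        = W u.succ v.succ - W u.succ c'.succ - W c.succ v.succ + W c.succ c'.succ := by
    intro u v hu hv
    simp [hR2, Fin.succ_ne_zero, hv, hR1rowb u hu]; ring
  -- expand along row 0
  have hdet3 : R2.det = (-1:ℝ)^((c':ℕ)+1) * (R2.submatrix Fin.succ (c'.succ).succAbove).det := by
    rw [Matrix.det_succ_row_zero]
    rw [Finset.sum_eq_single_of_mem c'.succ (Finset.mem_univ _)]
    · rw [hR2row0, if_pos rfl, Fin.val_succ]; ring
    · intro b _ hb
      rw [hR2row0, if_neg hb]; ring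
  set Z := R2.submatrix Fin.succ (c'.succ).succAbove with hZ
  have hZcol0 : ∀ u : Fin (m+1), Z u 0 = if u = c then 1 else 0 := by
    intro u
    have h0 : (c'.succ).succAbove 0 = 0 := Fin.succAbove_ne_zero_zero (Fin.succ_ne_zero c')
    rw [hZ]
    simp only [Matrix.submatrix_apply, h0, hR2col0]
    by_cases hu : u = c
    · subst hu; simp
    · rw [if_neg (fun h => hu (Fin.succ_injective _ h)), if_neg hu]
  have hdet4 : Z.det = (-1:ℝ)^((c:ℕ)) * (Z.submatrix c.succAbove Fin.succ).det := by
    rw [Matrix.det_succ_column_zero]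
    rw [Finset.sum_eq_single_of_mem c (Finset.mem_univ _)]
    · rw [hZcol0, if_pos rfl]; ring
    · intro b _ hb
      rw [hZcol0, if_neg hb]; ring
  have hfinal : Z.submatrix c.succAbove Fin.succ = Matrix.of fun a b : Fin m =>
      W (c.succAbove a).succ (c'.succAbove b).succ - W (c.succAbove a).succ c'.succ
        - W c.succ (c'.succAbove b).succ + W c.succ c'.succ := by
    ext a b
    have h1 : (c'.succ).succAbove b.succ = (c'.succAbove b).succ := Fin.succ_succAbove_succ c' b
    simp only [hZ, Matrix.submatrix_apply, h1, Matrix.of_apply]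
    exact hR2ent (c.succAbove a) (c'.succAbove b) (Fin.succAbove_ne c a) (Fin.succAbove_ne c' b)
  rw [← hdet1, ← hdet2, hdet3, hdet4, hfinal]
  rw [pow_succ, pow_add]
  ring

/-- Cofactor formula: determinant after replacing column `q` with the `p`-th basis vector. -/
lemma det_updateColumn_single {N : ℕ} (A : Matrix (Fin (N+1)) (Fin (N+1)) ℝ) (p q : Fin (N+1)) :
    (A.updateCol q (Pi.single p 1)).det
      = (-1)^((p:ℕ)+(q:ℕ)) * (A.submatrix p.succAbove q.succAbove).det := by
  rw [Matrix.det_succ_column _ q]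
  rw [Finset.sum_eq_single_of_mem p (Finset.mem_univ _)]
  · have h1 : (A.updateCol q (Pi.single p 1)) p q = 1 := by
      simp [Matrix.updateCol_apply]
    have h2 : (A.updateCol q (Pi.single p 1)).submatrix p.succAbove q.succAbove
        = A.submatrix p.succAbove q.succAbove := by
      ext a b
      simp [Matrix.updateCol_apply, Fin.succAbove_ne q b]
    rw [h1, h2]; ring
  · intro b _ hb
    have : (A.updateCol q (Pi.single p 1)) b q = 0 := by
      simp [Matrix.updateCol_apply, Pi.single_apply, hb]
    rw [this]; ring

/-- Polarization identity for four points. -/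
lemma polar {E : Type*} [NormedAddCommGroup E] [InnerProductSpace ℝ E] (x y a b : E) :
    -(‖x - y‖^2 - ‖a - y‖^2 - ‖x - b‖^2 + ‖a - b‖^2)/2 = ⟪x - a, y - b⟫ := by
  have h : ∀ u v : E, ‖u - v‖^2 = ‖u‖^2 - 2*⟪u,v⟫ + ‖v‖^2 := fun u v => norm_sub_sq_real u v
  simp only [h, inner_sub_left, inner_sub_right]
  ring

/-- The bordered matrix associated to a symmetric array of "squared distances". -/
noncomputable def bordMat {k : ℕ} (L : Fin (k+1) → Fin (k+1) → ℝ) :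
    Matrix (Fin (k+2)) (Fin (k+2)) ℝ :=
  Matrix.of (Fin.cases (Fin.cases 0 fun _ => (1:ℝ)) (fun u => Fin.cases 1 (fun v => -(L u v)/2)))

@[simp] lemma bordMat_zero_zero {k : ℕ} (L : Fin (k+1) → Fin (k+1) → ℝ) :
    bordMat L 0 0 = 0 := rfl

@[simp] lemma bordMat_zero_succ {k : ℕ} (L : Fin (k+1) → Fin (k+1) → ℝ) (v : Fin (k+1)) :
    bordMat L 0 v.succ = 1 := rfl

@[simp] lemma bordMat_succ_zero {k : ℕ} (L : Fin (k+1) → Fin (k+1) → ℝ) (u : Fin (k+1)) :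
    bordMat L u.succ 0 = 1 := by
  simp [bordMat]

@[simp] lemma bordMat_succ_succ {k : ℕ} (L : Fin (k+1) → Fin (k+1) → ℝ) (u v : Fin (k+1)) :
    bordMat L u.succ v.succ = -(L u v)/2 := by
  simp [bordMat]

end GramDerivAux

open GramDerivAux Matrix Finset

lemma modSqDist_symm {n k : ℕ} (P : Fin (k + 1) → EuclideanSpace ℝ (Fin n))
    (i j : Fin (k + 1)) (s : ℝ) (u v : Fin (k + 1)) :
    modSqDist P i j s u v = modSqDist P i j s v u := by
  unfold modSqDist
  rw [norm_sub_rev]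
  by_cases h1 : u = v
  · simp [h1]
  · rw [if_neg h1, if_neg (Ne.symm h1)]
    by_cases h2 : (u = i ∧ v = j) ∨ (u = j ∧ v = i)
    · rw [if_pos h2, if_pos (by tauto)]
    · rw [if_neg h2, if_neg (by tauto)]

lemma modSqDist_zero {n k : ℕ} (P : Fin (k + 1) → EuclideanSpace ℝ (Fin n))
    (i j : Fin (k + 1)) (u v : Fin (k + 1)) :
    modSqDist P i j 0 u v = ‖P u - P v‖ ^ 2 := by
  unfold modSqDist
  split_ifs with h1 h2
  · subst h1; simp
  · ring
  · rfl

set_option maxHeartbeats 2000000 in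
/-- The derivative at `s = 0` of the determinant of the Gram-type matrix
`G(s)_{ab} = (L(s)_{1a} + L(s)_{1b} − L(s)_{ab})/2` built from the modified squared
distances equals `det(⟨P_a − P_i, P_b − P_j⟩)` with `a, b` running over the indices
other than `i` and `j`. -/
theorem deriv_gram_det_sq_dist {n k : ℕ} (P : Fin (k + 1) → EuclideanSpace ℝ (Fin n))
    (i j : Fin (k + 1)) (hij : i < j) :
    HasDerivAt
      (fun s : ℝ => Matrix.det (Matrix.of fun a b : Fin k =>
        (modSqDist P i j s 0 a.succ + modSqDist P i j s 0 b.succ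
          - modSqDist P i j s a.succ b.succ) / 2))
      (Matrix.det (Matrix.of fun (a b : {x : Fin (k + 1) // x ≠ i ∧ x ≠ j}) =>
        (inner ℝ (P a.1 - P i) (P b.1 - P j) : ℝ)))
      0 := by
  rcases k with _ | k
  · -- `Fin 1` has no pair `i < j`
    exfalso
    obtain ⟨iv, hi⟩ := i; obtain ⟨jv, hj⟩ := j
    rw [Fin.lt_def] at hij
    simp at hi hj
    omega
  have hne : i ≠ j := ne_of_lt hij
  have hij' : (i:ℕ) < (j:ℕ) := hij
  have hjlt : (j:ℕ) < k + 2 := j.isLt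
  -- the bordered matrix path
  set W : ℝ → Matrix (Fin (k+3)) (Fin (k+3)) ℝ := fun s => bordMat (modSqDist P i j s) with hW
  set Dm : Matrix (Fin (k+3)) (Fin (k+3)) ℝ := Matrix.of fun x y =>
    if (x = i.succ ∧ y = j.succ) ∨ (x = j.succ ∧ y = i.succ) then (-1/2 : ℝ) else 0 with hDm
  -- Claim 1: the Gram-type determinant is minus the bordered determinant
  have claim1 : ∀ s : ℝ, (Matrix.of fun a b : Fin (k+1) =>
      (modSqDist P i j s 0 a.succ + modSqDist P i j s 0 b.succ
        - modSqDist P i j s a.succ b.succ) / 2).det = -(W s).det := by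
    intro s
    rw [hW]
    rw [bordered_det (bordMat (modSqDist P i j s)) (bordMat_zero_zero _)
      (bordMat_zero_succ _) (bordMat_succ_zero _) 0 0]
    have h0 : ((0 : Fin (k+2)) : ℕ) + ((0 : Fin (k+2)) : ℕ) = 0 := rfl
    rw [h0, pow_zero]
    simp only [Fin.zero_succAbove, bordMat_succ_succ]
    rw [neg_one_mul, neg_neg]
    congr 1
    ext a b
    have hd : modSqDist P i j s 0 0 = 0 := by unfold modSqDist; simp
    rw [Matrix.of_apply, Matrix.of_apply, hd,
      modSqDist_symm P i j s a.succ 0]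
    ring
  -- Claim 2: the path is affine in `s`
  have claim2 : ∀ s : ℝ, W s = W 0 + s • Dm := by
    intro s
    ext x y
    rcases Fin.eq_zero_or_eq_succ x with rfl | ⟨u, rfl⟩
    · have hx1 : (0 : Fin (k+3)) ≠ i.succ := Ne.symm (Fin.succ_ne_zero i)
      have hx2 : (0 : Fin (k+3)) ≠ j.succ := Ne.symm (Fin.succ_ne_zero j)
      rcases Fin.eq_zero_or_eq_succ y with rfl | ⟨v, rfl⟩ <;>
        simp [hW, hDm, Matrix.add_apply, Matrix.smul_apply, hx1, hx2]
    · rcases Fin.eq_zero_or_eq_succ y with rfl | ⟨v, rfl⟩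
      · have hy1 : (0 : Fin (k+3)) ≠ j.succ := Ne.symm (Fin.succ_ne_zero j)
        have hy2 : (0 : Fin (k+3)) ≠ i.succ := Ne.symm (Fin.succ_ne_zero i)
        simp [hW, hDm, Matrix.add_apply, Matrix.smul_apply, hy1, hy2]
      · simp only [hW, hDm, Matrix.add_apply, Matrix.smul_apply, bordMat_succ_succ,
          Matrix.of_apply, Fin.succ_inj, smul_eq_mul]
        unfold modSqDist
        split_ifs with h1 h2
        · rcases h2 with ⟨h2a, h2b⟩ | ⟨h2a, h2b⟩
          · exact absurd (h2a.symm.trans (h1.trans h2b)) hne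
          · exact absurd (h2a.symm.trans (h1.trans h2b)) hne.symm
        · ring
        · ring
        · ring
  -- symmetry of the bordered matrix
  have Wsym : (W 0)ᵀ = W 0 := by
    ext x y
    rcases Fin.eq_zero_or_eq_succ x with rfl | ⟨u, rfl⟩ <;>
      rcases Fin.eq_zero_or_eq_succ y with rfl | ⟨v, rfl⟩
    · rfl
    · simp [hW]
    · simp [hW]
    · simp only [hW, Matrix.transpose_apply, bordMat_succ_succ]
      rw [modSqDist_symm]
  -- the derivative of the bordered determinant
  have hD := hasDerivAt_det_add_smul (W 0) Dm
  -- compute the sum of updated determinants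
  set Ymin := (W 0).submatrix (i.succ).succAbove (j.succ).succAbove with hYmin
  have hsum : (∑ q : Fin (k+3), ((W 0).updateCol q fun r => Dm r q).det)
      = -(-1:ℝ)^((i:ℕ)+(j:ℕ)) * Ymin.det := by
    have hterm0 : ∀ q : Fin (k+3), q ≠ i.succ → q ≠ j.succ →
        ((W 0).updateCol q fun r => Dm r q).det = 0 := by
      intro q hq1 hq2
      apply Matrix.det_eq_zero_of_column_eq_zero q
      intro r
      rw [Matrix.updateCol_self]
      simp [hDm, hq1, hq2]
    have hcol_i : (fun r => Dm r i.succ) = (-1/2 : ℝ) • (Pi.single j.succ 1 : Fin (k+3) → ℝ) := by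
      funext r
      have : ¬(i.succ = j.succ) := fun h => hne (Fin.succ_injective _ h)
      simp only [hDm, Matrix.of_apply, Pi.smul_apply, Pi.single_apply, smul_eq_mul, this,
        and_false, false_or, and_true]
      split_ifs <;> ring
    have hcol_j : (fun r => Dm r j.succ) = (-1/2 : ℝ) • (Pi.single i.succ 1 : Fin (k+3) → ℝ) := by
      funext r
      have : ¬(j.succ = i.succ) := fun h => hne.symm (Fin.succ_injective _ h)
      simp only [hDm, Matrix.of_apply, Pi.smul_apply, Pi.single_apply, smul_eq_mul, this,
        and_false, or_false, and_true]
      split_ifs <;> ring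
    have hmem : j.succ ∈ (Finset.univ.erase i.succ : Finset (Fin (k+3))) :=
      Finset.mem_erase.mpr ⟨fun h => hne.symm (Fin.succ_injective _ h), Finset.mem_univ _⟩
    rw [← Finset.add_sum_erase _ _ (Finset.mem_univ i.succ)]
    rw [Finset.sum_eq_single_of_mem j.succ hmem
      (fun b hb hbj => hterm0 b (Finset.ne_of_mem_erase hb) hbj)]
    rw [hcol_i, hcol_j, Matrix.det_updateCol_smul, Matrix.det_updateCol_smul,
      det_updateColumn_single, det_updateColumn_single]
    have htr : (W 0).submatrix (j.succ).succAbove (i.succ).succAbove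
        = ((W 0).submatrix (i.succ).succAbove (j.succ).succAbove)ᵀ := by
      rw [Matrix.transpose_submatrix, Wsym]
    rw [htr, Matrix.det_transpose, ← hYmin]
    have hv1 : ((j.succ : Fin (k+3)) : ℕ) = (j:ℕ)+1 := Fin.val_succ j
    have hv2 : ((i.succ : Fin (k+3)) : ℕ) = (i:ℕ)+1 := Fin.val_succ i
    rw [hv1, hv2]
    have hp1 : ((-1:ℝ))^((j:ℕ)+1+((i:ℕ)+1)) = (-1:ℝ)^((i:ℕ)+(j:ℕ)) := by
      rw [show (j:ℕ)+1+((i:ℕ)+1) = ((i:ℕ)+(j:ℕ))+2 by ring, pow_add]; norm_num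
    have hp2 : ((-1:ℝ))^((i:ℕ)+1+((j:ℕ)+1)) = (-1:ℝ)^((i:ℕ)+(j:ℕ)) := by
      rw [show (i:ℕ)+1+((j:ℕ)+1) = ((i:ℕ)+(j:ℕ))+2 by ring, pow_add]; norm_num
    rw [hp1, hp2]
    ring
  -- the base indices for the reduction of the minor
  have hk1 : (j:ℕ) - 1 < k + 1 := by omega
  have hk2 : (i:ℕ) < k + 1 := by omega
  set j₀ : Fin (k+1) := ⟨(j:ℕ)-1, hk1⟩ with hj₀
  set i₁ : Fin (k+1) := ⟨(i:ℕ), hk2⟩ with hi₁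
  have hsaj : i.succAbove j₀ = j := by
    rw [Fin.succAbove_of_le_castSucc]
    · apply Fin.ext; simp [Fin.val_succ, hj₀]; omega
    · rw [Fin.le_def]; simp [hj₀]; omega
  have hsai : j.succAbove i₁ = i := by
    rw [Fin.succAbove_of_castSucc_lt]
    · apply Fin.ext; simp [hi₁]
    · rw [Fin.lt_def]; simp [hi₁]; omega
  -- the minor is again a bordered matrix; reduce it
  have hY00 : Ymin 0 0 = 0 := by
    rw [hYmin]
    simp only [Matrix.submatrix_apply,
      Fin.succAbove_ne_zero_zero (Fin.succ_ne_zero i),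
      Fin.succAbove_ne_zero_zero (Fin.succ_ne_zero j)]
    simp [hW]
  have hY0s : ∀ v : Fin (k+1), Ymin 0 v.succ = 1 := by
    intro v
    rw [hYmin]
    simp only [Matrix.submatrix_apply,
      Fin.succAbove_ne_zero_zero (Fin.succ_ne_zero i),
      Fin.succ_succAbove_succ]
    simp [hW]
  have hYs0 : ∀ u : Fin (k+1), Ymin u.succ 0 = 1 := by
    intro u
    rw [hYmin]
    simp only [Matrix.submatrix_apply,
      Fin.succAbove_ne_zero_zero (Fin.succ_ne_zero j),
      Fin.succ_succAbove_succ]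
    simp [hW]
  have hYent : ∀ u v : Fin (k+1), Ymin u.succ v.succ
      = -(‖P (i.succAbove u) - P (j.succAbove v)‖^2)/2 := by
    intro u v
    rw [hYmin]
    simp only [Matrix.submatrix_apply, Fin.succ_succAbove_succ]
    simp [hW, modSqDist_zero]
  have hYdet := bordered_det Ymin hY00 hY0s hYs0 j₀ i₁
  -- the enumerations of the complement of {i, j}
  set φ : Fin k → Fin (k+2) := fun a => i.succAbove (j₀.succAbove a) with hφ
  set ψ : Fin k → Fin (k+2) := fun b => j.succAbove (i₁.succAbove b) with hψ
  have hφi : ∀ a, φ a ≠ i := fun a => Fin.succAbove_ne i _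
  have hφj : ∀ a, φ a ≠ j := fun a h =>
    Fin.succAbove_ne j₀ a (Fin.succAbove_right_injective (h.trans hsaj.symm))
  have hψj : ∀ b, ψ b ≠ j := fun b => Fin.succAbove_ne j _
  have hψi : ∀ b, ψ b ≠ i := fun b h =>
    Fin.succAbove_ne i₁ b (Fin.succAbove_right_injective (h.trans hsai.symm))
  -- the target entry computation for the reduced minor
  have hFent : ∀ a b : Fin k,
      Ymin (j₀.succAbove a).succ (i₁.succAbove b).succ - Ymin (j₀.succAbove a).succ i₁.succ
        - Ymin j₀.succ (i₁.succAbove b).succ + Ymin j₀.succ i₁.succ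
      = ⟪P (φ a) - P j, P (ψ b) - P i⟫ := by
    intro a b
    rw [hYent, hYent, hYent, hYent, hsaj, hsai]
    rw [← polar (P (φ a)) (P (ψ b)) (P j) (P i)]
    ring
  -- cardinality of the complement subtype
  have hcard : Fintype.card {x : Fin (k+2) // x ≠ i ∧ x ≠ j} = k := by
    rw [Fintype.card_subtype]
    have hfil : (Finset.univ.filter fun x : Fin (k+2) => x ≠ i ∧ x ≠ j)
        = Finset.univ \ {i, j} := by
      ext x
      simp [not_or]
    rw [hfil, Finset.card_sdiff_of_subset (Finset.subset_univ _)]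
    rw [Finset.card_insert_of_notMem (by simp [hne]), Finset.card_singleton]
    simp
  have hinjφ : Function.Injective φ := fun a b h =>
    Fin.succAbove_right_injective (Fin.succAbove_right_injective h)
  have hinjψ : Function.Injective ψ := fun a b h =>
    Fin.succAbove_right_injective (Fin.succAbove_right_injective h)
  have hbijφ : Function.Bijective (fun a : Fin k => (⟨φ a, hφi a, hφj a⟩ :
      {x : Fin (k+2) // x ≠ i ∧ x ≠ j})) := by
    rw [Fintype.bijective_iff_injective_and_card]
    constructor
    · intro a b h
      exact hinjφ (congrArg Subtype.val h)
    · rw [hcard, Fintype.card_fin]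
  have hbijψ : Function.Bijective (fun b : Fin k => (⟨ψ b, hψi b, hψj b⟩ :
      {x : Fin (k+2) // x ≠ i ∧ x ≠ j})) := by
    rw [Fintype.bijective_iff_injective_and_card]
    constructor
    · intro a b h
      exact hinjψ (congrArg Subtype.val h)
    · rw [hcard, Fintype.card_fin]
  have hφψ : φ = ψ := by
    have h1 : StrictMono φ := (Fin.strictMono_succAbove i).comp (Fin.strictMono_succAbove j₀)
    have h2 : StrictMono ψ := (Fin.strictMono_succAbove j).comp (Fin.strictMono_succAbove i₁)
    haveI : WellFoundedLT (Fin k) := Finite.to_wellFoundedLT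
    refine (StrictMono.range_inj h1 h2).mp ?_
    ext x
    simp only [Set.mem_range]
    constructor
    · rintro ⟨a, rfl⟩
      obtain ⟨b, hb⟩ := hbijψ.surjective ⟨φ a, hφi a, hφj a⟩
      exact ⟨b, congrArg Subtype.val hb⟩
    · rintro ⟨b, rfl⟩
      obtain ⟨a, ha⟩ := hbijφ.surjective ⟨ψ b, hψi b, hψj b⟩
      exact ⟨a, congrArg Subtype.val ha⟩
  set e : Fin k ≃ {x : Fin (k+2) // x ≠ i ∧ x ≠ j} :=
    Equiv.ofBijective _ hbijφ with he
  set T : Matrix {x : Fin (k+1+1) // x ≠ i ∧ x ≠ j} {x : Fin (k+1+1) // x ≠ i ∧ x ≠ j} ℝ :=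
    Matrix.of fun a b : {x : Fin (k+1+1) // x ≠ i ∧ x ≠ j} =>
      (inner ℝ (P a.1 - P i) (P b.1 - P j) : ℝ) with hT
  have hFdet : (Matrix.of fun a b : Fin k =>
      Ymin (j₀.succAbove a).succ (i₁.succAbove b).succ - Ymin (j₀.succAbove a).succ i₁.succ
        - Ymin j₀.succ (i₁.succAbove b).succ + Ymin j₀.succ i₁.succ).det = T.det := by
    have hmats : (Matrix.of fun a b : Fin k =>
        Ymin (j₀.succAbove a).succ (i₁.succAbove b).succ - Ymin (j₀.succAbove a).succ i₁.succ
          - Ymin j₀.succ (i₁.succAbove b).succ + Ymin j₀.succ i₁.succ)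
        = (Tᵀ).submatrix e e := by
      ext a b
      rw [Matrix.of_apply, hFent a b]
      have hb' : ψ b = φ b := congrFun hφψ.symm b
      simp only [Matrix.submatrix_apply, Matrix.transpose_apply, he, Equiv.ofBijective_apply, hT,
        Matrix.of_apply]
      rw [hb']
      exact real_inner_comm _ _
    rw [hmats, Matrix.det_submatrix_equiv_self, Matrix.det_transpose]
  -- assemble everything
  have hfun : (fun s : ℝ => Matrix.det (Matrix.of fun a b : Fin (k+1) =>
      (modSqDist P i j s 0 a.succ + modSqDist P i j s 0 b.succ
        - modSqDist P i j s a.succ b.succ) / 2))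
      = fun s : ℝ => -((W 0 + s • Dm).det) := by
    funext s
    rw [claim1 s, claim2 s]
  rw [hfun]
  have hDneg := hD.fun_neg
  convert hDneg using 1
  · rfl
  · rfl
  rw [hsum, hYdet, hFdet]
  have key : ((-1:ℝ))^((i:ℕ)+(j:ℕ)) * ((-1:ℝ))^(((j₀:ℕ))+((i₁:ℕ))) = -1 := by
    rw [← pow_add]
    refine Odd.neg_one_pow ⟨(i:ℕ)+(j:ℕ)-1, ?_⟩
    simp only [hj₀, hi₁]
    omega
  linear_combination T.det * key
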